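/- arXiv:math/0005015 — 4 statements merged into one kernel-verified Lean document; each statement's English description precedes it below -/
import Mathlib

section
/- Let p be a prime number and s a complex number. The function x ↦ ‖x‖_p^s (the complex power of the real number ‖x‖_p) is integrable on ℤ_p with respect to the Haar measure μ if and only if Re(s) > -1. -/
open MeasureTheory

noncomputable instance (p : ℕ) [Fact p.Prime] : MeasurableSpace ℚ_[p] := borel _
instance (p : ℕ) [Fact p.Prime] : BorelSpace ℚ_[p] := ⟨rfl⟩

open scoped ENNReal NNReal

namespace PadicCpowAux
variable (p : ℕ) [hp : Fact p.Prime]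

def B (n : ℕ) : Set ℚ_[p] := {x | ‖x‖ ≤ (p : ℝ) ^ (-(n : ℤ))}

lemma hp1 : (1 : ℝ) < p := by exact_mod_cast hp.out.one_lt
lemma hp0 : (0 : ℝ) < p := lt_trans one_pos (hp1 p)

lemma mem_B_iff (n : ℕ) (x : ℚ_[p]) : x ∈ B p n ↔ ‖x‖ ≤ (p : ℝ) ^ (-(n : ℤ)) := Iff.rfl

lemma B_anti : Antitone (B p) := by
  intro m n hmn x hx
  refine le_trans hx ((zpow_le_zpow_iff_right₀ (hp1 p)).2 (by omega))

set_option maxHeartbeats 1000000 in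
lemma B_eq_iUnion (n : ℕ) :
    B p n = ⋃ k ∈ Finset.range p,
      (fun x => (-((k : ℚ_[p]) * (p : ℚ_[p]) ^ n)) + x) ⁻¹' B p (n + 1) := by
  have hpn : ‖((p : ℚ_[p]) ^ n)‖ = (p : ℝ) ^ (-(n : ℤ)) := Padic.norm_p_pow n
  have hpnpos : (0:ℝ) < (p : ℝ) ^ (-(n : ℤ)) := zpow_pos (hp0 p) _
  have hexp : (p : ℝ) ^ (-((n : ℕ) + 1 : ℕ) : ℤ) = (p : ℝ) ^ (-(n : ℤ)) * (p : ℝ)⁻¹ := by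
    rw [← zpow_neg_one, ← zpow_add₀ (ne_of_gt (hp0 p))]
    congr 1
    push_cast
    ring
  ext x
  simp only [Set.mem_iUnion, Set.mem_preimage, mem_B_iff, Finset.mem_range]
  constructor
  · intro hx
    have hzq : ‖x / (p : ℚ_[p]) ^ n‖ ≤ 1 := by
      rw [norm_div, hpn, div_le_one hpnpos]
      simpa using hx
    set z : ℤ_[p] := ⟨x / (p : ℚ_[p]) ^ n, hzq⟩ with hz
    refine ⟨z.zmodRepr, z.zmodRepr_lt_p, ?_⟩
    have hmem : ‖z - (z.zmodRepr : ℤ_[p])‖ < 1 := by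
      rw [PadicInt.norm_lt_one_iff_dvd]
      have h := PadicInt.sub_zmodRepr_mem z
      rwa [PadicInt.maximalIdeal_eq_span_p, Ideal.mem_span_singleton] at h
    have hnorm : ‖z - (z.zmodRepr : ℤ_[p])‖ ≤ (p : ℝ)⁻¹ := by
      have := (PadicInt.norm_le_pow_iff_norm_lt_pow_add_one (z - (z.zmodRepr : ℤ_[p])) (-1)).2
        (by simpa using hmem)
      simpa using this
    have hpn0 : ((p : ℚ_[p]) ^ n) ≠ 0 := pow_ne_zero _ (by exact_mod_cast hp.out.ne_zero)
    have hxe : -( (z.zmodRepr : ℚ_[p]) * (p : ℚ_[p]) ^ n) + x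
        = (p : ℚ_[p]) ^ n * ((z - (z.zmodRepr : ℤ_[p]) : ℤ_[p]) : ℚ_[p]) := by
      push_cast
      rw [hz]
      field_simp
      ring
    rw [hxe, norm_mul, hpn, hexp]
    have : ‖((z - (z.zmodRepr : ℤ_[p]) : ℤ_[p]) : ℚ_[p])‖ ≤ (p:ℝ)⁻¹ := hnorm
    exact mul_le_mul_of_nonneg_left this (le_of_lt hpnpos)
  · rintro ⟨k, hk, hx⟩
    have h1 : ‖(k : ℚ_[p]) * (p : ℚ_[p]) ^ n‖ ≤ (p : ℝ) ^ (-(n : ℤ)) := by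
      rw [norm_mul, hpn]
      have : ‖(k : ℚ_[p])‖ ≤ 1 := by
        have := Padic.norm_int_le_one (p := p) (k : ℤ)
        simpa using this
      nlinarith
    have hco : x = (-((k : ℚ_[p]) * (p : ℚ_[p]) ^ n) + x) + (k : ℚ_[p]) * (p : ℚ_[p]) ^ n := by ring
    rw [hco]
    refine le_trans (Padic.nonarchimedean _ _) (max_le (le_trans hx ?_) h1)
    exact (zpow_le_zpow_iff_right₀ (hp1 p)).2 (by omega)


lemma measurableSet_B (n : ℕ) : MeasurableSet (B p n) :=
  (isClosed_le continuous_norm continuous_const).measurableSet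

set_option maxHeartbeats 1000000 in
lemma measure_B (μ : Measure ℚ_[p]) [μ.IsAddHaarMeasure]
    (hμ : μ (B p 0) = 1) (n : ℕ) : μ (B p n) = ((p : ℝ≥0∞))⁻¹ ^ n := by
  have hpE0 : (p : ℝ≥0∞) ≠ 0 := by
    simp [hp.out.ne_zero]
  have hpEt : (p : ℝ≥0∞) ≠ ⊤ := ENNReal.natCast_ne_top p
  have key : ∀ m : ℕ, μ (B p m) = (p : ℝ≥0∞) * μ (B p (m + 1)) := by
    intro m
    have hdisj : (↑(Finset.range p) : Set ℕ).PairwiseDisjoint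
        (fun k : ℕ => (fun x => (-((k : ℚ_[p]) * (p : ℚ_[p]) ^ m)) + x) ⁻¹' B p (m + 1)) := by
      intro a ha b hb hab
      refine Set.disjoint_left.2 fun x hxa hxb => ?_
      simp only [Finset.coe_range, Set.mem_Iio] at ha hb
      simp only [Set.mem_preimage, mem_B_iff] at hxa hxb
      have hpm : ‖((p : ℚ_[p]) ^ m)‖ = (p : ℝ) ^ (-(m : ℤ)) := Padic.norm_p_pow m
      have hkey : ‖((a : ℚ_[p]) - b) * (p : ℚ_[p]) ^ m‖ ≤ (p : ℝ) ^ (-((m : ℕ) + 1 : ℕ) : ℤ) := by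
        have heq : ((a : ℚ_[p]) - b) * (p : ℚ_[p]) ^ m
            = (-((b : ℚ_[p]) * (p : ℚ_[p]) ^ m) + x) - (-((a : ℚ_[p]) * (p : ℚ_[p]) ^ m) + x) := by
          ring
        rw [heq, sub_eq_add_neg]
        refine le_trans (Padic.nonarchimedean _ _) (max_le hxb ?_)
        rw [norm_neg]
        exact hxa
      rw [norm_mul, hpm] at hkey
      have hexp : (p : ℝ) ^ (-((m : ℕ) + 1 : ℕ) : ℤ) = (p : ℝ)⁻¹ * (p : ℝ) ^ (-(m : ℤ)) := by
        rw [← zpow_neg_one, ← zpow_add₀ (ne_of_gt (hp0 p))]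
        congr 1
        push_cast
        ring
      rw [hexp] at hkey
      have hpmpos : (0:ℝ) < (p : ℝ) ^ (-(m : ℤ)) := zpow_pos (hp0 p) _
      have hab2 : ‖((a : ℚ_[p]) - b)‖ ≤ (p:ℝ)⁻¹ := le_of_mul_le_mul_right
        (by linarith [hkey]) hpmpos
      have hd : ‖(((a : ℤ) - b : ℤ) : ℚ_[p])‖ < 1 := by
        push_cast
        calc ‖((a : ℚ_[p]) - b)‖ ≤ (p:ℝ)⁻¹ := hab2
          _ < 1 := by
            rw [inv_lt_one₀ (hp0 p)]
            exact hp1 p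
      rw [Padic.norm_intCast_lt_one_iff] at hd
      have h0 : ((a : ℤ) - b) = 0 := Int.eq_zero_of_abs_lt_dvd hd
        (abs_sub_lt_iff.2 ⟨by omega, by omega⟩)
      exact hab (by omega)
    have hmeas : ∀ b ∈ Finset.range p, MeasurableSet
        ((fun x => (-((b : ℚ_[p]) * (p : ℚ_[p]) ^ m)) + x) ⁻¹' B p (m + 1)) := fun b _ =>
      (measurableSet_B p (m+1)).preimage (measurable_const_add _)
    rw [B_eq_iUnion p m, measure_biUnion_finset hdisj hmeas]
    have : ∀ b ∈ Finset.range p,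
        μ ((fun x => (-((b : ℚ_[p]) * (p : ℚ_[p]) ^ m)) + x) ⁻¹' B p (m + 1))
          = μ (B p (m + 1)) := fun b _ => measure_preimage_add μ _ _
    rw [Finset.sum_congr rfl this, Finset.sum_const, Finset.card_range, nsmul_eq_mul]
  induction n with
  | zero => simpa using hμ
  | succ n ih =>
    have h := key n
    have h2 : μ (B p (n+1)) = (p : ℝ≥0∞)⁻¹ * ((p : ℝ≥0∞) * μ (B p (n+1))) := by
      rw [← mul_assoc, ENNReal.inv_mul_cancel hpE0 hpEt, one_mul]
    rw [h2, ← h, ih, pow_succ, mul_comm]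

end PadicCpowAux
namespace PadicCpowAux
variable (p : ℕ) [hp : Fact p.Prime]

lemma hexp (n : ℕ) : (p : ℝ) ^ (-((n + 1 : ℕ) : ℤ)) = (p : ℝ) ^ (-(n : ℤ)) * (p : ℝ)⁻¹ := by
  rw [← zpow_neg_one, ← zpow_add₀ (ne_of_gt (hp0 p))]
  congr 1
  push_cast
  ring

/-- the shell of norm exactly `p^{-n}` (inside `B n`). -/
def S (n : ℕ) : Set ℚ_[p] := B p n \ B p (n + 1)

lemma measurableSet_S (n : ℕ) : MeasurableSet (S p n) :=
  (measurableSet_B p n).diff (measurableSet_B p (n + 1))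

lemma norm_eq_of_mem_S {n : ℕ} {x : ℚ_[p]} (hx : x ∈ S p n) : ‖x‖ = (p : ℝ) ^ (-(n : ℤ)) := by
  obtain ⟨h1, h2⟩ := hx
  have hx0 : x ≠ 0 := by
    rintro rfl
    exact h2 (by simp only [mem_B_iff, norm_zero]; positivity)
  rw [mem_B_iff] at h1
  rw [Padic.norm_eq_zpow_neg_valuation hx0] at h1 ⊢
  have h2' : ¬ (p : ℝ) ^ (-x.valuation) ≤ (p : ℝ) ^ (-((n + 1 : ℕ) : ℤ)) := by
    intro hc
    exact h2 (by rw [mem_B_iff, Padic.norm_eq_zpow_neg_valuation hx0]; exact hc)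
  rw [zpow_le_zpow_iff_right₀ (hp1 p)] at h1
  congr 1
  rw [not_le, zpow_lt_zpow_iff_right₀ (hp1 p)] at h2'
  push_cast at h1 h2' ⊢
  omega

lemma S_pairwise : Pairwise (Function.onFun Disjoint (S p)) := by
  intro i j hij
  refine Set.disjoint_left.2 fun x hxi hxj => ?_
  have h1 := norm_eq_of_mem_S p hxi
  have h2 := norm_eq_of_mem_S p hxj
  rw [h1] at h2
  have := (zpow_right_strictMono₀ (hp1 p)).injective h2
  exact hij (by omega)

lemma iUnion_S : (⋃ n, S p n) = B p 0 \ {0} := by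
  ext x
  simp only [Set.mem_iUnion, Set.mem_diff, Set.mem_singleton_iff]
  constructor
  · rintro ⟨n, hn⟩
    refine ⟨B_anti p (Nat.zero_le n) hn.1, ?_⟩
    intro h0
    have := norm_eq_of_mem_S p hn
    rw [h0, norm_zero] at this
    have : (0:ℝ) < 0 := by
      nth_rewrite 2 [this]
      exact zpow_pos (hp0 p) _
    exact lt_irrefl _ this
  · rintro ⟨hx1, hx0⟩
    rw [mem_B_iff] at hx1
    have hval : 0 ≤ x.valuation := by
      rw [← Padic.norm_le_one_iff_val_nonneg]
      simpa using hx1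
    refine ⟨x.valuation.toNat, ?_, ?_⟩
    · rw [mem_B_iff, Padic.norm_eq_zpow_neg_valuation hx0]
      rw [zpow_le_zpow_iff_right₀ (hp1 p)]
      omega
    · rw [mem_B_iff, Padic.norm_eq_zpow_neg_valuation hx0]
      intro hc
      rw [zpow_le_zpow_iff_right₀ (hp1 p)] at hc
      push_cast at hc
      omega

open MeasureTheory in
lemma measure_S (μ : Measure ℚ_[p]) [μ.IsAddHaarMeasure]
    (hμ : μ (B p 0) = 1) (n : ℕ) :
    μ (S p n) = ENNReal.ofReal ((p : ℝ) ^ (-(n : ℤ)) * (1 - (p : ℝ)⁻¹)) := by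
  have hinv : ∀ m : ℕ, ((p : ℝ≥0∞))⁻¹ ^ m = ENNReal.ofReal ((p : ℝ) ^ (-(m : ℤ))) := by
    intro m
    have h1 : (p : ℝ≥0∞)⁻¹ = ENNReal.ofReal (p : ℝ)⁻¹ := by
      rw [ENNReal.ofReal_inv_of_pos (hp0 p), ENNReal.ofReal_natCast]
    rw [h1, ← ENNReal.ofReal_pow (by positivity)]
    congr 1
    rw [zpow_neg, zpow_natCast, inv_pow]
  have hfin : μ (B p (n + 1)) ≠ ⊤ := by
    rw [measure_B p μ hμ]
    exact ENNReal.pow_ne_top (ENNReal.inv_ne_top.2 (by simp [hp.out.ne_zero]))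
  rw [S, measure_diff (B_anti p (by omega)) (measurableSet_B p (n+1)).nullMeasurableSet hfin,
    measure_B p μ hμ, measure_B p μ hμ, hinv, hinv,
    ← ENNReal.ofReal_sub _ (by positivity)]
  congr 1
  rw [hexp]
  ring

end PadicCpowAux
namespace PadicCpowAux
variable (p : ℕ) [hp : Fact p.Prime]

open MeasureTheory Filter

lemma measure_singleton_zero (μ : Measure ℚ_[p]) [μ.IsAddHaarMeasure]
    (hμ : μ (B p 0) = 1) : μ ({0} : Set ℚ_[p]) = 0 := by
  have hle : ∀ n : ℕ, μ ({0} : Set ℚ_[p]) ≤ (p : ℝ≥0∞)⁻¹ ^ n := by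
    intro n
    rw [← measure_B p μ hμ n]
    refine measure_mono ?_
    intro x hx
    rw [Set.mem_singleton_iff] at hx
    subst hx
    rw [mem_B_iff, norm_zero]
    positivity
  have htend : Tendsto (fun n : ℕ => (p : ℝ≥0∞)⁻¹ ^ n) atTop (nhds 0) := by
    refine ENNReal.tendsto_pow_atTop_nhds_zero_of_lt_one ?_
    rw [ENNReal.inv_lt_one]
    exact_mod_cast hp.out.one_lt
  have := ge_of_tendsto' htend hle
  simpa using this

theorem main (μ : Measure ℚ_[p]) [μ.IsAddHaarMeasure]
    (hμ : μ {x : ℚ_[p] | ‖x‖ ≤ 1} = 1) (s : ℂ) :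
    IntegrableOn (fun x : ℚ_[p] => (‖x‖ : ℂ) ^ s) {x : ℚ_[p] | ‖x‖ ≤ 1} μ ↔
      -1 < s.re := by
  have hset : {x : ℚ_[p] | ‖x‖ ≤ 1} = B p 0 := by
    ext x; simp [mem_B_iff]
  rw [hset] at hμ ⊢
  set f : ℚ_[p] → ℂ := fun x => (‖x‖ : ℂ) ^ s with hf
  have h0 : μ ({0} : Set ℚ_[p]) = 0 := measure_singleton_zero p μ hμ
  -- a.e. strong measurability
  have hrest : μ.restrict (B p 0) = μ.restrict (B p 0 \ {0}) := by
    refine Measure.restrict_congr_set ?_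
    rw [Filter.eventuallyEq_set]
    filter_upwards [measure_eq_zero_iff_ae_notMem.1 h0] with x hx
    simp only [Set.mem_diff, Set.mem_singleton_iff]
    exact ⟨fun h => ⟨h, hx⟩, fun h => h.1⟩
  have hcont : ContinuousOn f (B p 0 \ {0}) := by
    intro x hx
    have hx0 : x ≠ 0 := hx.2
    refine ContinuousAt.continuousWithinAt ?_
    have hnorm : (0:ℝ) < ‖x‖ := norm_pos_iff.2 hx0
    refine ContinuousAt.cpow ?_ continuousAt_const ?_
    · exact (Complex.continuous_ofReal.comp continuous_norm).continuousAt
    · rw [Complex.mem_slitPlane_iff]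
      left
      simpa using hnorm
  have hsm : AEStronglyMeasurable f (μ.restrict (B p 0)) := by
    rw [hrest]
    exact hcont.aestronglyMeasurable ((measurableSet_B p 0).diff (measurableSet_singleton 0))
  have hiff : IntegrableOn f (B p 0) μ ↔ (∫⁻ x in B p 0, (‖f x‖₊ : ℝ≥0∞) ∂μ) < ⊤ :=
    ⟨fun h => h.2, fun h => ⟨hsm, h⟩⟩
  rw [hiff]
  -- compute the lintegral
  set c : ℝ := (p : ℝ) ^ (-(s.re + 1)) with hc
  have hc0 : 0 ≤ c := Real.rpow_nonneg (le_of_lt (hp0 p)) _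
  set R : ℝ≥0∞ := ENNReal.ofReal c with hR
  set T : ℝ≥0∞ := ENNReal.ofReal (1 - (p : ℝ)⁻¹) with hT
  have hT0 : T ≠ 0 := by
    rw [hT, ← ENNReal.ofReal_zero, Ne, ENNReal.ofReal_eq_ofReal_iff (by
      have := hp1 p
      have : (p:ℝ)⁻¹ < 1 := by rw [inv_lt_one₀ (hp0 p)]; exact this
      linarith) le_rfl]
    have : (p:ℝ)⁻¹ < 1 := by rw [inv_lt_one₀ (hp0 p)]; exact hp1 p
    intro hcon
    linarith
  have hae : B p 0 =ᵐ[μ] ⋃ n, S p n := by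
    rw [iUnion_S]
    rw [Filter.eventuallyEq_set]
    filter_upwards [measure_eq_zero_iff_ae_notMem.1 h0] with x hx
    simp only [Set.mem_diff, Set.mem_singleton_iff]
    exact ⟨fun h => ⟨h, hx⟩, fun h => h.1⟩
  rw [setLIntegral_congr hae, lintegral_iUnion (measurableSet_S p) (S_pairwise p)]
  have hterm : ∀ n : ℕ, (∫⁻ x in S p n, (‖f x‖₊ : ℝ≥0∞) ∂μ) = R ^ n * T := by
    intro n
    have hstep : ∀ x ∈ S p n,
        (‖f x‖₊ : ℝ≥0∞) = ENNReal.ofReal (((p : ℝ) ^ (-(n : ℤ))) ^ s.re) := by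
      intro x hx
      have hnx : ‖x‖ = (p : ℝ) ^ (-(n : ℤ)) := norm_eq_of_mem_S p hx
      have hpos : (0:ℝ) < ‖x‖ := by rw [hnx]; exact zpow_pos (hp0 p) _
      rw [← ENNReal.ofReal_coe_nnreal, coe_nnnorm]
      congr 1
      rw [hf]
      simp only []
      rw [Complex.norm_cpow_eq_rpow_re_of_pos hpos, hnx]
    rw [setLIntegral_congr_fun (measurableSet_S p n) hstep,
      setLIntegral_const, measure_S p μ hμ n]
    rw [← ENNReal.ofReal_mul (by positivity)]
    have hreal : ((p : ℝ) ^ (-(n : ℤ))) ^ s.re * ((p : ℝ) ^ (-(n : ℤ)) * (1 - (p : ℝ)⁻¹))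
        = c ^ n * (1 - (p : ℝ)⁻¹) := by
      have hple : (0:ℝ) ≤ p := le_of_lt (hp0 p)
      have hz : (p : ℝ) ^ (-(n : ℤ)) = (p : ℝ) ^ ((-(n : ℤ) : ℤ) : ℝ) :=
        (Real.rpow_intCast _ _).symm
      rw [hc, hz, ← Real.rpow_natCast ((p : ℝ) ^ (-(s.re + 1))) n,
        ← Real.rpow_mul hple, ← Real.rpow_mul hple, ← mul_assoc, ← Real.rpow_add (hp0 p)]
      congr 2
      push_cast
      ring
    rw [hreal, ENNReal.ofReal_mul (by positivity), ENNReal.ofReal_pow hc0]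
  rw [tsum_congr hterm, ENNReal.tsum_mul_right, ENNReal.tsum_geometric]
  -- final equivalence
  constructor
  · intro h
    by_contra hre
    push_neg at hre
    have hc1 : 1 ≤ c := by
      rw [hc]
      exact Real.one_le_rpow (le_of_lt (hp1 p)) (by linarith)
    have hR1 : 1 ≤ R := by
      rw [hR]
      exact ENNReal.one_le_ofReal.2 hc1
    rw [tsub_eq_zero_of_le hR1, ENNReal.inv_zero, ENNReal.top_mul hT0] at h
    exact lt_irrefl _ h
  · intro h
    have hc1 : c < 1 := by
      rw [hc]
      exact Real.rpow_lt_one_of_one_lt_of_neg (hp1 p) (by linarith)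
    have hR1 : R < 1 := by
      rw [hR]
      exact ENNReal.ofReal_lt_one.2 hc1
    have hsub : (0:ℝ≥0∞) < 1 - R := tsub_pos_of_lt hR1
    have h1 : (1 - R)⁻¹ < ⊤ := ENNReal.inv_lt_top.2 hsub
    exact ENNReal.mul_lt_top h1 (by rw [hT]; exact ENNReal.ofReal_lt_top)

end PadicCpowAux

/-- The function `x ↦ ‖x‖^s` is integrable on `ℤ_p` (with respect to the Haar
measure `μ` on `ℚ_p` normalized by `μ(ℤ_p) = 1`) if and only if `Re s > -1`. -/
theorem integrableOn_padic_norm_cpow_iff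
    (p : ℕ) [Fact p.Prime] (μ : Measure ℚ_[p]) [μ.IsAddHaarMeasure]
    (hμ : μ {x : ℚ_[p] | ‖x‖ ≤ 1} = 1) (s : ℂ) :
    IntegrableOn (fun x : ℚ_[p] => (‖x‖ : ℂ) ^ s) {x : ℚ_[p] | ‖x‖ ≤ 1} μ ↔
      -1 < s.re :=
  PadicCpowAux.main p μ hμ s
end

section
/- Let p be a prime number and s a complex number with Re(s) > -1. Then ∫_{x ∈ ℤ_p, ‖x‖_p ≤ 1/p} ‖x‖_p^s dμ(x) = (1/p) · (p - 1)/(p^{s+1} - 1), where p^{s+1} denotes the complex power of the real number p. -/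
open MeasureTheory

open ENNReal

variable {p : ℕ} [hp : Fact p.Prime]

lemma exists_residue (y : ℚ_[p]) (hy : ‖y‖ ≤ 1) :
    ∃ k < p, ‖y - (k : ℚ_[p])‖ ≤ ((p : ℝ))⁻¹ := by
  set z : ℤ_[p] := ⟨y, hy⟩ with hz
  refine ⟨(PadicInt.toZMod z).val, ZMod.val_lt _, ?_⟩
  have h := PadicInt.toZMod_spec z
  rw [PadicInt.maximalIdeal_eq_span_p] at h
  have h2 : ‖z - (ZMod.cast (PadicInt.toZMod z) : ℤ_[p])‖ ≤ (p : ℝ) ^ (-(1:ℕ) : ℤ) := by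
    rw [PadicInt.norm_le_pow_iff_mem_span_pow]
    simpa using h
  rw [← ZMod.natCast_val] at h2
  have h3 : ((z - ((PadicInt.toZMod z).val : ℤ_[p]) : ℤ_[p]) : ℚ_[p]) =
      y - ((PadicInt.toZMod z).val : ℚ_[p]) := by push_cast [hz]; rfl
  calc ‖y - ((PadicInt.toZMod z).val : ℚ_[p])‖ = ‖(z - ((PadicInt.toZMod z).val : ℤ_[p]) : ℤ_[p])‖ := by
        rw [PadicInt.norm_def, h3]
    _ ≤ (p : ℝ) ^ (-(1:ℕ) : ℤ) := h2
    _ = (p : ℝ)⁻¹ := by simp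

local notation "q" => ((p : ℝ))⁻¹

lemma qpos : (0:ℝ) < (p:ℝ)⁻¹ := by
  have := hp.out.pos; positivity

lemma qlt1 : (p:ℝ)⁻¹ < 1 := by
  have h1 : (1:ℝ) < p := by exact_mod_cast hp.out.one_lt
  rw [inv_lt_one_iff₀]; right; exact h1

def Bset (p : ℕ) [Fact p.Prime] (n : ℕ) : Set ℚ_[p] := {x | ‖x‖ ≤ ((p : ℝ))⁻¹ ^ n}

lemma Bset_measurable (n : ℕ) : MeasurableSet (Bset p n) :=
  (isClosed_le (continuous_norm) continuous_const).measurableSet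

lemma Bset_cover (n : ℕ) :
    Bset p n = ⋃ k ∈ Finset.range p,
      (fun x => (k : ℚ_[p]) * (p : ℚ_[p]) ^ n + x) '' Bset p (n + 1) := by
  have hpQ : ((p : ℚ_[p])) ≠ 0 := by
    exact_mod_cast (Nat.cast_ne_zero (R := ℚ_[p])).2 hp.out.pos.ne'
  have hnormpn : ‖(p : ℚ_[p]) ^ n‖ = q ^ n := by
    rw [norm_pow, Padic.norm_p, inv_pow]
  have hqn : (0:ℝ) < q ^ n := pow_pos qpos n
  ext x
  simp only [Bset, Set.mem_setOf_eq, Set.mem_iUnion, Finset.mem_range, Set.mem_image]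
  constructor
  · intro hx
    set y : ℚ_[p] := x / (p : ℚ_[p]) ^ n with hy
    have hyn : ‖y‖ ≤ 1 := by
      rw [hy, norm_div, hnormpn, div_le_one hqn]
      exact hx
    obtain ⟨k, hk, hknorm⟩ := exists_residue y hyn
    refine ⟨k, hk, x - (k : ℚ_[p]) * (p : ℚ_[p]) ^ n, ?_, by ring⟩
    have hxr : x - (k : ℚ_[p]) * (p : ℚ_[p]) ^ n = (p : ℚ_[p]) ^ n * (y - k) := by
      rw [hy]; field_simp
    show ‖x - (k : ℚ_[p]) * (p : ℚ_[p]) ^ n‖ ≤ q ^ (n+1)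
    rw [hxr, norm_mul, hnormpn, pow_succ]
    exact mul_le_mul_of_nonneg_left hknorm (le_of_lt hqn)
  · rintro ⟨k, hk, u, hu, rfl⟩
    have hu' : ‖u‖ ≤ q ^ (n+1) := hu
    have h1 : ‖(k : ℚ_[p]) * (p : ℚ_[p]) ^ n‖ ≤ q ^ n := by
      rw [norm_mul, hnormpn]
      have : ‖((k:ℤ) : ℚ_[p])‖ ≤ 1 := Padic.norm_int_le_one _
      calc ‖((k:ℕ) : ℚ_[p])‖ * q ^ n ≤ 1 * q ^ n := by
            apply mul_le_mul_of_nonneg_right _ (le_of_lt hqn)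
            exact_mod_cast this
        _ = q ^ n := one_mul _
    show ‖(k : ℚ_[p]) * (p : ℚ_[p]) ^ n + u‖ ≤ q ^ n
    refine le_trans (Padic.nonarchimedean _ _) (max_le h1 ?_)
    calc ‖u‖ ≤ q ^ (n+1) := hu'
      _ ≤ q ^ n := by
          rw [pow_succ]
          nlinarith [qpos (p := p), qlt1 (p := p), hqn]

lemma Bset_disjoint (n : ℕ) :
    (Finset.range p : Set ℕ).Pairwise
      (Function.onFun Disjoint
        fun k => (fun x => (k : ℚ_[p]) * (p : ℚ_[p]) ^ n + x) '' Bset p (n + 1)) := by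
  intro k hk j hj hkj
  simp only [Finset.coe_range, Set.mem_Iio] at hk hj
  rw [Function.onFun, Set.disjoint_left]
  rintro x hxk hxj
  obtain ⟨u, hu, rfl⟩ := hxk
  obtain ⟨v, hv, huv⟩ := hxj
  have hu' : ‖u‖ ≤ q ^ (n+1) := hu
  have hv' : ‖v‖ ≤ q ^ (n+1) := hv
  have key : ((k:ℚ_[p]) - j) * (p : ℚ_[p]) ^ n = v - u := by linear_combination -huv
  have hnormpn : ‖(p : ℚ_[p]) ^ n‖ = q ^ n := by
    rw [norm_pow, Padic.norm_p, inv_pow]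
  have hnorm : ‖((k:ℚ_[p]) - j)‖ * q ^ n ≤ q ^ (n+1) := by
    rw [← hnormpn, ← norm_mul, key]
    calc ‖v - u‖ ≤ max ‖v‖ ‖(-u)‖ := by
          have := Padic.nonarchimedean v (-u)
          simpa [sub_eq_add_neg] using this
      _ ≤ q ^ (n+1) := max_le hv' (by simpa using hu')
  have hq : ‖((k:ℚ_[p]) - j)‖ ≤ q := by
    have h2 : ‖((k:ℚ_[p]) - j)‖ * q ^ n ≤ q * q ^ n := by
      rw [pow_succ] at hnorm; linarith [hnorm]
    exact le_of_mul_le_mul_right h2 (pow_pos qpos n)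
  have hdvd : (p : ℤ) ∣ ((k : ℤ) - j) := by
    have : ‖(((k:ℤ) - j : ℤ) : ℚ_[p])‖ ≤ (p:ℝ) ^ (-(1:ℕ) : ℤ) := by
      push_cast
      simpa using hq
    rw [Padic.norm_int_le_pow_iff_dvd] at this
    simpa using this
  have habs : |(k : ℤ) - j| < p := by
    rw [abs_lt]
    constructor <;> omega
  have := Int.eq_zero_of_abs_lt_dvd hdvd habs
  omega

lemma Bset_measure (μ : Measure ℚ_[p]) [μ.IsAddHaarMeasure]
    (hμ : μ {x : ℚ_[p] | ‖x‖ ≤ 1} = 1) (n : ℕ) :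
    μ (Bset p n) = ((p : ℝ≥0∞))⁻¹ ^ n := by
  induction n with
  | zero =>
      have : Bset p 0 = {x : ℚ_[p] | ‖x‖ ≤ 1} := by
        ext x; simp [Bset]
      rw [this, hμ]; simp
  | succ n ih =>
      have hcov := Bset_cover (p := p) n
      have hmeas : ∀ k ∈ Finset.range p,
          MeasurableSet ((fun x => (k : ℚ_[p]) * (p : ℚ_[p]) ^ n + x) '' Bset p (n + 1)) := by
        intro k _
        rw [Set.image_add_left]
        exact (measurable_const_add _) (Bset_measurable (n+1))
      have hsum : μ (Bset p n) = ∑ k ∈ Finset.range p,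
          μ ((fun x => (k : ℚ_[p]) * (p : ℚ_[p]) ^ n + x) '' Bset p (n + 1)) := by
        rw [hcov]
        exact measure_biUnion_finset (Bset_disjoint n) hmeas
      have heach : ∀ k ∈ Finset.range p,
          μ ((fun x => (k : ℚ_[p]) * (p : ℚ_[p]) ^ n + x) '' Bset p (n + 1)) =
            μ (Bset p (n+1)) := by
        intro k _
        rw [Set.image_add_left]
        exact measure_preimage_add μ _ _
      rw [Finset.sum_congr rfl heach, Finset.sum_const, Finset.card_range] at hsum
      have hp0 : ((p : ℝ≥0∞)) ≠ 0 := by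
        exact_mod_cast Nat.cast_ne_zero.2 hp.out.pos.ne'
      have hpt : ((p : ℝ≥0∞)) ≠ ⊤ := ENNReal.natCast_ne_top p
      have : ((p : ℝ≥0∞))⁻¹ * μ (Bset p n) = μ (Bset p (n+1)) := by
        rw [hsum, nsmul_eq_mul, ← mul_assoc, ENNReal.inv_mul_cancel hp0 hpt, one_mul]
      rw [← this, ih, pow_succ]
      ring

def Sset (p : ℕ) [Fact p.Prime] (n : ℕ) : Set ℚ_[p] := {x | ‖x‖ = ((p : ℝ))⁻¹ ^ n}

lemma Sset_measurable (n : ℕ) : MeasurableSet (Sset p n) :=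
  (isClosed_eq continuous_norm continuous_const).measurableSet

lemma hq_zpow (m : ℕ) : ((p:ℝ))⁻¹ ^ m = (p:ℝ) ^ (-(m:ℤ)) := by
  rw [zpow_neg, inv_pow, zpow_natCast]

lemma one_lt_pR : (1:ℝ) < p := by exact_mod_cast hp.out.one_lt

lemma Sset_eq_diff (n : ℕ) : Sset p n = Bset p n \ Bset p (n+1) := by
  ext x
  simp only [Sset, Bset, Set.mem_setOf_eq, Set.mem_diff, not_le]
  constructor
  · intro h
    refine ⟨le_of_eq h, ?_⟩
    rw [h, pow_succ]
    nlinarith [qpos (p := p), qlt1 (p := p), pow_pos (qpos (p := p)) n]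
  · rintro ⟨h1, h2⟩
    have hx0 : x ≠ 0 := by
      rintro rfl
      rw [norm_zero] at h2
      exact absurd h2 (not_lt.2 (le_of_lt (pow_pos (qpos (p:=p)) (n+1))))
    have hval := Padic.norm_eq_zpow_neg_valuation hx0
    rw [hval, hq_zpow n] at h1
    rw [hval, hq_zpow (n+1)] at h2
    rw [zpow_le_zpow_iff_right₀ one_lt_pR] at h1
    rw [zpow_lt_zpow_iff_right₀ one_lt_pR] at h2
    have : x.valuation = n := by omega
    rw [hval, this, hq_zpow n]

lemma Sset_measure (μ : Measure ℚ_[p]) [μ.IsAddHaarMeasure]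
    (hμ : μ {x : ℚ_[p] | ‖x‖ ≤ 1} = 1) (n : ℕ) :
    μ (Sset p n) = ((p : ℝ≥0∞))⁻¹ ^ n - ((p : ℝ≥0∞))⁻¹ ^ (n+1) := by
  rw [Sset_eq_diff]
  rw [measure_diff ?hsub ((Bset_measurable (n+1)).nullMeasurableSet) ?hfin]
  · rw [Bset_measure μ hμ, Bset_measure μ hμ]
  case hsub =>
    intro x hx
    have : ((p:ℝ))⁻¹ ^ (n+1) ≤ ((p:ℝ))⁻¹ ^ n := by
      rw [pow_succ]
      nlinarith [qpos (p := p), qlt1 (p := p), pow_pos (qpos (p := p)) n]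
    exact le_trans hx this
  case hfin =>
    rw [Bset_measure μ hμ]
    exact ENNReal.pow_ne_top (ENNReal.inv_ne_top.2 (by exact_mod_cast Nat.cast_ne_zero.2 hp.out.pos.ne'))

lemma Sset_measure_toReal (μ : Measure ℚ_[p]) [μ.IsAddHaarMeasure]
    (hμ : μ {x : ℚ_[p] | ‖x‖ ≤ 1} = 1) (n : ℕ) :
    (μ (Sset p n)).toReal = ((p:ℝ))⁻¹ ^ n * (1 - ((p:ℝ))⁻¹) := by
  rw [Sset_measure μ hμ]
  have hp0 : ((p : ℝ≥0∞)) ≠ 0 := by exact_mod_cast Nat.cast_ne_zero.2 hp.out.pos.ne'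
  have h1 : ((p : ℝ≥0∞))⁻¹ ^ (n+1) ≤ ((p : ℝ≥0∞))⁻¹ ^ n := by
    apply pow_le_pow_of_le_one zero_le (ENNReal.inv_le_one.2 (by
      exact_mod_cast Nat.one_le_cast.2 hp.out.one_lt.le)) (by omega)
  have h2 : ((p : ℝ≥0∞))⁻¹ ^ n ≠ ⊤ :=
    ENNReal.pow_ne_top (ENNReal.inv_ne_top.2 hp0)
  rw [ENNReal.toReal_sub_of_le h1 h2]
  have h3 : ∀ m : ℕ, (((p : ℝ≥0∞))⁻¹ ^ m).toReal = ((p:ℝ))⁻¹ ^ m := by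
    intro m
    rw [ENNReal.toReal_pow, ENNReal.toReal_inv]
    norm_num
  rw [h3, h3, pow_succ]
  ring

lemma domain_eq :
    {x : ℚ_[p] | ‖x‖ ≤ 1 / (p:ℝ)} = {(0:ℚ_[p])} ∪ ⋃ n : ℕ, Sset p (n+1) := by
  have hq1 : ((p:ℝ))⁻¹ = (p:ℝ) ^ (-(1:ℤ)) := by simp
  ext x
  simp only [Set.mem_setOf_eq, Set.mem_union, Set.mem_singleton_iff, Set.mem_iUnion]
  constructor
  · intro hx
    rcases eq_or_ne x 0 with rfl | hx0
    · exact Or.inl rfl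
    · right
      have hval := Padic.norm_eq_zpow_neg_valuation hx0
      rw [hval, one_div, hq1] at hx
      rw [zpow_le_zpow_iff_right₀ one_lt_pR] at hx
      have hv1 : 1 ≤ x.valuation := by omega
      refine ⟨(x.valuation - 1).toNat, ?_⟩
      show ‖x‖ = ((p:ℝ))⁻¹ ^ ((x.valuation - 1).toNat + 1)
      rw [hval, hq_zpow]
      congr 1
      omega
  · rintro (rfl | ⟨n, hn⟩)
    · simp [one_div]
    · have : ‖x‖ = ((p:ℝ))⁻¹ ^ (n+1) := hn
      rw [this, one_div, pow_succ]
      calc ((p:ℝ))⁻¹ ^ n * ((p:ℝ))⁻¹ ≤ 1 * ((p:ℝ))⁻¹ := by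
            apply mul_le_mul_of_nonneg_right _ (le_of_lt (qpos (p := p)))
            exact pow_le_one₀ (le_of_lt (qpos (p:=p))) (le_of_lt (qlt1 (p:=p)))
        _ = ((p:ℝ))⁻¹ := one_mul _

lemma measure_singleton_zero (μ : Measure ℚ_[p]) [μ.IsAddHaarMeasure]
    (hμ : μ {x : ℚ_[p] | ‖x‖ ≤ 1} = 1) : μ {(0:ℚ_[p])} = 0 := by
  have hlt : ((p : ℝ≥0∞))⁻¹ < 1 :=
    ENNReal.inv_lt_one.2 (by exact_mod_cast Nat.one_lt_cast.2 hp.out.one_lt)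
  have h1 : ∀ n : ℕ, μ {(0:ℚ_[p])} ≤ ((p : ℝ≥0∞))⁻¹ ^ n := by
    intro n
    rw [← Bset_measure μ hμ n]
    apply measure_mono
    intro x hx
    simp only [Set.mem_singleton_iff] at hx
    subst hx
    show ‖(0:ℚ_[p])‖ ≤ _
    rw [norm_zero]
    positivity
  have := ge_of_tendsto' (ENNReal.tendsto_pow_atTop_nhds_zero_of_lt_one hlt) h1
  simpa using this

lemma Sset_pairwise_disjoint :
    Pairwise (Function.onFun Disjoint fun n : ℕ => Sset p (n+1)) := by
  intro m n hmn
  rw [Function.onFun, Set.disjoint_left]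
  intro x hxm hxn
  have h1 : ‖x‖ = ((p:ℝ))⁻¹ ^ (m+1) := hxm
  have h2 : ‖x‖ = ((p:ℝ))⁻¹ ^ (n+1) := hxn
  rw [h1] at h2
  have := pow_right_injective₀ (qpos (p:=p)) (ne_of_lt (qlt1 (p:=p))) h2
  omega

lemma norm_integral_sphere (μ : Measure ℚ_[p]) [μ.IsAddHaarMeasure]
    (hμ : μ {x : ℚ_[p] | ‖x‖ ≤ 1} = 1) (s : ℂ) (m : ℕ) :
    ∫ x in Sset p m, ‖((‖x‖ : ℝ) : ℂ) ^ s‖ ∂μ =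
      (((p:ℝ))⁻¹ ^ m * (1 - ((p:ℝ))⁻¹)) * (((p:ℝ))⁻¹ ^ m) ^ s.re := by
  have hqm : (0:ℝ) < ((p:ℝ))⁻¹ ^ m := pow_pos (qpos (p:=p)) m
  have heq : Set.EqOn (fun x : ℚ_[p] => ‖((‖x‖ : ℝ) : ℂ) ^ s‖)
      (fun _ => (((p:ℝ))⁻¹ ^ m) ^ s.re) (Sset p m) := by
    intro x hx
    have hx' : ‖x‖ = ((p:ℝ))⁻¹ ^ m := hx
    simp only [hx']
    rw [Complex.norm_cpow_eq_rpow_re_of_pos hqm]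
  rw [setIntegral_congr_fun (Sset_measurable m) heq, setIntegral_const, measureReal_def,
    Sset_measure_toReal μ hμ, smul_eq_mul]

lemma integrableOn_sphere (μ : Measure ℚ_[p]) [μ.IsAddHaarMeasure]
    (hμ : μ {x : ℚ_[p] | ‖x‖ ≤ 1} = 1) (s : ℂ) (m : ℕ) :
    IntegrableOn (fun x : ℚ_[p] => ((‖x‖ : ℝ) : ℂ) ^ s) (Sset p m) μ := by
  have heq : Set.EqOn (fun x : ℚ_[p] => ((‖x‖ : ℝ) : ℂ) ^ s)
      (fun _ => ((((p:ℝ))⁻¹ ^ m : ℝ) : ℂ) ^ s) (Sset p m) := by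
    intro x hx
    have hx' : ‖x‖ = ((p:ℝ))⁻¹ ^ m := hx
    simp only [hx']
  rw [integrableOn_congr_fun heq (Sset_measurable m)]
  refine integrableOn_const ?_
  rw [Sset_measure μ hμ]
  exact (lt_of_le_of_lt tsub_le_self
    (ENNReal.pow_lt_top (ENNReal.inv_lt_top.2 (by exact_mod_cast hp.out.pos : (0:ℝ≥0∞) < p)))).ne

lemma sphere_integral_value (μ : Measure ℚ_[p]) [μ.IsAddHaarMeasure]
    (hμ : μ {x : ℚ_[p] | ‖x‖ ≤ 1} = 1) (s : ℂ) (m : ℕ) :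
    ∫ x in Sset p m, ((‖x‖ : ℝ) : ℂ) ^ s ∂μ =
      (1 - ((p:ℂ))⁻¹) * ((((p:ℂ)) ^ (s+1))⁻¹) ^ m := by
  have heq : Set.EqOn (fun x : ℚ_[p] => ((‖x‖ : ℝ) : ℂ) ^ s)
      (fun _ => ((((p:ℝ))⁻¹ ^ m : ℝ) : ℂ) ^ s) (Sset p m) := by
    intro x hx
    have hx' : ‖x‖ = ((p:ℝ))⁻¹ ^ m := hx
    simp only [hx']
  rw [setIntegral_congr_fun (Sset_measurable m) heq, setIntegral_const, measureReal_def,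
    Sset_measure_toReal μ hμ, Complex.real_smul]
  -- now pure algebra
  have hP : ((p:ℂ)) ≠ 0 := by exact_mod_cast Nat.cast_ne_zero.2 hp.out.pos.ne'
  have hbase : ((((p:ℝ))⁻¹ ^ m : ℝ) : ℂ) = (((p:ℂ)) ^ m)⁻¹ := by push_cast; rw [inv_pow]
  have harg : (((p:ℂ)) ^ m).arg ≠ Real.pi := by
    have : (((p:ℂ)) ^ m) = (((p^m : ℕ) : ℝ) : ℂ) := by push_cast; ring
    rw [this, Complex.arg_ofReal_of_nonneg (by positivity)]
    exact Ne.symm Real.pi_ne_zero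
  have h1 : ((((p:ℝ))⁻¹ ^ m : ℝ) : ℂ) ^ s = ((((p:ℂ)) ^ m) ^ s)⁻¹ := by
    rw [hbase, Complex.inv_cpow _ _ harg]
  have h2 : (((p:ℂ)) ^ m) ^ s = ((p:ℂ)) ^ ((m : ℂ) * s) :=
    (Complex.natCast_cpow_natCast_mul p m s).symm
  have h3 : (((p:ℂ)) ^ (s+1)) ^ m = ((p:ℂ)) ^ ((m:ℂ) * s) * ((p:ℂ)) ^ m := by
    rw [← Complex.cpow_nat_mul]
    rw [show (m : ℂ) * (s + 1) = (m:ℂ) * s + (m:ℂ) by ring,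
      Complex.cpow_add _ _ hP, Complex.cpow_natCast]
  have hA : ((p:ℂ)) ^ ((m : ℂ) * s) ≠ 0 := by
    intro h
    rw [Complex.cpow_eq_zero_iff] at h
    exact hP h.1
  have hB : (((p:ℂ)) ^ m) ≠ 0 := pow_ne_zero _ hP
  have hcast : ((((p:ℝ))⁻¹ ^ m * (1 - ((p:ℝ))⁻¹) : ℝ) : ℂ) =
      (((p:ℂ)) ^ m)⁻¹ * (1 - ((p:ℂ))⁻¹) := by push_cast; rw [inv_pow]
  rw [hcast, h1, h2, inv_pow, h3, mul_inv]
  ring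

lemma real_term (s : ℂ) (m : ℕ) :
    (((p:ℝ))⁻¹ ^ m * (1 - ((p:ℝ))⁻¹)) * ((((p:ℝ))⁻¹ ^ m) ^ s.re) =
      (1 - ((p:ℝ))⁻¹) * (((p:ℝ))⁻¹ ^ (s.re + 1)) ^ m := by
  have h1 : ((((p:ℝ))⁻¹ ^ m) : ℝ) ^ (s.re + 1) = (((p:ℝ))⁻¹ ^ m) ^ s.re * ((p:ℝ))⁻¹ ^ m := by
    rw [Real.rpow_add (pow_pos (qpos (p:=p)) m), Real.rpow_one]
  have h2 : ((((p:ℝ))⁻¹ ^ m) : ℝ) ^ (s.re + 1) = (((p:ℝ))⁻¹ ^ (s.re + 1)) ^ m := by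
    rw [← Real.rpow_natCast (((p:ℝ))⁻¹) m, ← Real.rpow_mul (le_of_lt (qpos (p:=p))),
      mul_comm, Real.rpow_mul (le_of_lt (qpos (p:=p))), Real.rpow_natCast]
  calc (((p:ℝ))⁻¹ ^ m * (1 - ((p:ℝ))⁻¹)) * ((((p:ℝ))⁻¹ ^ m) ^ s.re)
      = (1 - ((p:ℝ))⁻¹) * ((((p:ℝ))⁻¹ ^ m) ^ s.re * ((p:ℝ))⁻¹ ^ m) := by ring
    _ = (1 - ((p:ℝ))⁻¹) * (((p:ℝ))⁻¹ ^ (s.re + 1)) ^ m := by rw [← h1, h2]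

theorem integral_padic_norm_cpow_maximal_ideal'
    (μ : Measure ℚ_[p]) [μ.IsAddHaarMeasure]
    (hμ : μ {x : ℚ_[p] | ‖x‖ ≤ 1} = 1) (s : ℂ) (hs : -1 < s.re) :
    ∫ x in {x : ℚ_[p] | ‖x‖ ≤ 1 / p}, (‖x‖ : ℂ) ^ s ∂μ =
      (1 / p) * (((p : ℂ) - 1) / ((p : ℂ) ^ (s + 1) - 1)) := by
  have ppos : (0:ℝ) < p := by exact_mod_cast hp.out.pos
  have hP : ((p:ℂ)) ≠ 0 := by exact_mod_cast Nat.cast_ne_zero.2 hp.out.pos.ne'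
  -- a.e. identification of the domain with the union of spheres
  have hae : {x : ℚ_[p] | ‖x‖ ≤ 1 / (p:ℝ)} =ᵐ[μ] ⋃ n : ℕ, Sset p (n+1) := by
    rw [MeasureTheory.ae_eq_set]
    constructor
    · apply measure_mono_null _ (measure_singleton_zero μ hμ)
      rintro x ⟨hx1, hx2⟩
      rw [domain_eq] at hx1
      rcases hx1 with h | h
      · exact h
      · exact absurd h hx2
    · have : (⋃ n : ℕ, Sset p (n+1)) \ {x : ℚ_[p] | ‖x‖ ≤ 1 / (p:ℝ)} = ∅ := by
        rw [Set.diff_eq_empty]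
        rw [domain_eq]
        exact Set.subset_union_right
      rw [this]
      exact measure_empty
  rw [setIntegral_congr_set hae]
  -- integrability
  have hr0 : (0:ℝ) ≤ ((p:ℝ))⁻¹ ^ (s.re + 1) := Real.rpow_nonneg (le_of_lt (qpos (p:=p))) _
  have hr1 : ((p:ℝ))⁻¹ ^ (s.re + 1) < 1 :=
    Real.rpow_lt_one (le_of_lt (qpos (p:=p))) (qlt1 (p:=p)) (by linarith)
  have hint : IntegrableOn (fun x : ℚ_[p] => ((‖x‖ : ℝ) : ℂ) ^ s) (⋃ n : ℕ, Sset p (n+1)) μ := by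
    apply integrableOn_iUnion_of_summable_integral_norm
      (fun n => integrableOn_sphere μ hμ s _)
    have hterm : ∀ n : ℕ, ∫ x in Sset p (n+1), ‖((‖x‖ : ℝ) : ℂ) ^ s‖ ∂μ =
        ((1 - ((p:ℝ))⁻¹) * (((p:ℝ))⁻¹ ^ (s.re + 1))) * (((p:ℝ))⁻¹ ^ (s.re + 1)) ^ n := by
      intro n
      rw [norm_integral_sphere μ hμ s (n+1), real_term, pow_succ]
      ring
    apply Summable.congr _ (fun n => (hterm n).symm)
    exact (summable_geometric_of_lt_one hr0 hr1).mul_left _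
  rw [integral_iUnion (fun n => Sset_measurable _) Sset_pairwise_disjoint hint]
  have hval : ∀ n : ℕ, ∫ x in Sset p (n+1), ((‖x‖ : ℝ) : ℂ) ^ s ∂μ =
      (1 - ((p:ℂ))⁻¹) * ((((p:ℂ)) ^ (s+1))⁻¹) ^ (n+1) :=
    fun n => sphere_integral_value μ hμ s (n+1)
  rw [tsum_congr hval, tsum_mul_left]
  -- norms
  have hQnorm : ‖((p:ℂ)) ^ (s+1)‖ = (p:ℝ) ^ (s.re + 1) := by
    rw [show ((p:ℕ):ℂ) = (((p:ℕ):ℝ):ℂ) from by push_cast; rfl,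
      Complex.norm_cpow_eq_rpow_re_of_pos ppos]
    norm_num
  have h1Q : 1 < ‖((p:ℂ)) ^ (s+1)‖ := by
    rw [hQnorm]
    rw [Real.one_lt_rpow_iff_of_pos ppos]
    exact Or.inl ⟨one_lt_pR, by linarith⟩
  have hw : ‖(((p:ℂ)) ^ (s+1))⁻¹‖ < 1 := by
    rw [norm_inv]
    exact inv_lt_one_of_one_lt₀ h1Q
  have hgeom : ∑' n : ℕ, ((((p:ℂ)) ^ (s+1))⁻¹) ^ (n+1) =
      (((p:ℂ)) ^ (s+1))⁻¹ * (1 - (((p:ℂ)) ^ (s+1))⁻¹)⁻¹ := by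
    calc ∑' n : ℕ, ((((p:ℂ)) ^ (s+1))⁻¹) ^ (n+1)
        = ∑' n : ℕ, (((p:ℂ)) ^ (s+1))⁻¹ * ((((p:ℂ)) ^ (s+1))⁻¹) ^ n := by
          apply tsum_congr; intro n; rw [pow_succ]; ring
      _ = (((p:ℂ)) ^ (s+1))⁻¹ * ∑' n : ℕ, ((((p:ℂ)) ^ (s+1))⁻¹) ^ n := tsum_mul_left
      _ = (((p:ℂ)) ^ (s+1))⁻¹ * (1 - (((p:ℂ)) ^ (s+1))⁻¹)⁻¹ := by
          rw [tsum_geometric_of_norm_lt_one hw]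
  rw [hgeom]
  -- final algebra
  set Q : ℂ := ((p:ℂ)) ^ (s+1) with hQdef
  have hQ0 : Q ≠ 0 := by
    intro h; rw [h, norm_zero] at h1Q; linarith
  have hQ1 : Q - 1 ≠ 0 := by
    intro h
    have : Q = 1 := by linear_combination h
    rw [this, norm_one] at h1Q; linarith
  have hw0 : 1 - Q⁻¹ ≠ 0 := by
    intro h
    have : Q⁻¹ = 1 := by linear_combination -h
    have : Q = 1 := by
      field_simp at this
      simpa using this.symm
    rw [this, norm_one] at h1Q; linarith
  field_simp

/-- For `Re s > -1`,
`∫_{x ∈ ℤ_p, ‖x‖ ≤ 1/p} ‖x‖^s dμ(x) = (1/p) · (p-1)/(p^{s+1}-1)`,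
where `μ` is the Haar measure on `ℚ_p` with `μ(ℤ_p) = 1`. -/
theorem integral_padic_norm_cpow_maximal_ideal
    (p : ℕ) [Fact p.Prime] (μ : Measure ℚ_[p]) [μ.IsAddHaarMeasure]
    (hμ : μ {x : ℚ_[p] | ‖x‖ ≤ 1} = 1) (s : ℂ) (hs : -1 < s.re) :
    ∫ x in {x : ℚ_[p] | ‖x‖ ≤ 1 / p}, (‖x‖ : ℂ) ^ s ∂μ =
      (1 / p) * (((p : ℂ) - 1) / ((p : ℂ) ^ (s + 1) - 1)) := by
  exact integral_padic_norm_cpow_maximal_ideal' μ hμ s hs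
end

section
/- Let p be a prime number and s a complex number with Re(s) > -1. Then ∫_{ℤ_p} ‖x‖_p^s dμ(x) = (1 - 1/p)/(1 - p^{-(s+1)}), where p^{-(s+1)} denotes the complex power of the real number p. -/
open MeasureTheory
open scoped ENNReal

namespace PadicHaarAux

variable {p : ℕ} [hp : Fact p.Prime]

lemma one_lt_p : (1:ℝ) < (p:ℝ) := by exact_mod_cast hp.1.one_lt

lemma ball_measurable (n : ℕ) : MeasurableSet {x : ℚ_[p] | ‖x‖ ≤ (p:ℝ) ^ (-(n:ℤ))} :=
  (isClosed_le continuous_norm continuous_const).measurableSet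

lemma sphere_measurable (n : ℕ) : MeasurableSet {x : ℚ_[p] | ‖x‖ = (p:ℝ) ^ (-(n:ℤ))} :=
  (isClosed_eq continuous_norm continuous_const).measurableSet

lemma cover (n : ℕ) : {x : ℚ_[p] | ‖x‖ ≤ 1} =
    ⋃ i : Fin (p ^ n), {x : ℚ_[p] | ‖x - ((i : ℕ) : ℚ_[p])‖ ≤ (p:ℝ) ^ (-(n:ℤ))} := by
  ext x
  simp only [Set.mem_setOf_eq, Set.mem_iUnion]
  constructor
  · intro hx
    set z : ℤ_[p] := ⟨x, hx⟩ with hz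
    refine ⟨⟨z.appr n, z.appr_lt n⟩, ?_⟩
    have hsp := PadicInt.appr_spec n z
    have : ‖z - (z.appr n : ℤ_[p])‖ ≤ (p:ℝ) ^ (-(n:ℤ)) :=
      ((z - z.appr n).norm_le_pow_iff_mem_span_pow n).mpr hsp
    simpa [PadicInt.norm_def] using this
  · rintro ⟨i, hi⟩
    have h1 : ‖(((i:ℕ):ℚ_[p]))‖ ≤ 1 := by
      simpa using Padic.norm_int_le_one (p := p) (i : ℤ)
    have h2 : (p:ℝ) ^ (-(n:ℤ)) ≤ 1 := by
      apply zpow_le_one_of_nonpos₀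
      · exact_mod_cast hp.1.one_le
      · omega
    calc ‖x‖ = ‖(x - (i:ℕ)) + (i:ℕ)‖ := by ring_nf
      _ ≤ max ‖x - ((i:ℕ):ℚ_[p])‖ ‖(((i:ℕ):ℚ_[p]))‖ := Padic.nonarchimedean _ _
      _ ≤ 1 := max_le (hi.trans h2) h1

lemma cover_disjoint (n : ℕ) : Pairwise (Function.onFun Disjoint
    (fun i : Fin (p ^ n) => {x : ℚ_[p] | ‖x - ((i : ℕ) : ℚ_[p])‖ ≤ (p:ℝ) ^ (-(n:ℤ))})) := by
  intro i j hij
  rw [Function.onFun, Set.disjoint_left]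
  rintro x hxi hxj
  apply hij
  have : ‖((i:ℕ):ℚ_[p]) - ((j:ℕ):ℚ_[p])‖ ≤ (p:ℝ) ^ (-(n:ℤ)) := by
    have : ((i:ℕ):ℚ_[p]) - ((j:ℕ):ℚ_[p]) = (x - (j:ℕ)) + -(x - (i:ℕ)) := by ring
    rw [this]
    refine (Padic.nonarchimedean _ _).trans (max_le hxj ?_)
    simpa [norm_sub_rev] using hxi
  have hdvd : ((p:ℤ) ^ n) ∣ ((i:ℕ) : ℤ) - ((j:ℕ) : ℤ) := by
    rw [← Padic.norm_int_le_pow_iff_dvd]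
    push_cast
    exact this
  have hi' : ((i:ℕ) : ℤ) < (p:ℤ) ^ n := by exact_mod_cast i.isLt
  have hj' : ((j:ℕ) : ℤ) < (p:ℤ) ^ n := by exact_mod_cast j.isLt
  have := Int.eq_zero_of_abs_lt_dvd hdvd (by rw [abs_lt]; omega)
  have : (i : ℕ) = (j : ℕ) := by omega
  exact Fin.ext this

lemma sphere_eq (n : ℕ) : {x : ℚ_[p] | ‖x‖ = (p:ℝ) ^ (-(n:ℤ))} =
    {x : ℚ_[p] | ‖x‖ ≤ (p:ℝ) ^ (-(n:ℤ))} \ {x : ℚ_[p] | ‖x‖ ≤ (p:ℝ) ^ (-((n+1:ℕ):ℤ))} := by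
  have h1 : (1:ℝ) < (p:ℝ) := one_lt_p
  ext x
  simp only [Set.mem_setOf_eq, Set.mem_diff, not_le]
  constructor
  · intro hx
    refine ⟨le_of_eq hx, ?_⟩
    rw [hx]
    apply zpow_lt_zpow_right₀ h1
    omega
  · rintro ⟨hle, hlt⟩
    have hx0 : x ≠ 0 := by
      rintro rfl
      simp only [norm_zero] at hlt
      exact absurd hlt (not_lt.mpr (zpow_pos (by linarith) _).le)
    rw [Padic.norm_eq_zpow_neg_valuation hx0] at *
    have hv1 : -x.valuation ≤ -(n:ℤ) := (zpow_le_zpow_iff_right₀ h1).mp hle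
    have hv2 : (-((n+1:ℕ):ℤ)) < -x.valuation := (zpow_lt_zpow_iff_right₀ h1).mp hlt
    congr 1
    omega

lemma ball_antitone {m n : ℕ} (h : m ≤ n) :
    {x : ℚ_[p] | ‖x‖ ≤ (p:ℝ) ^ (-(n:ℤ))} ⊆ {x : ℚ_[p] | ‖x‖ ≤ (p:ℝ) ^ (-(m:ℤ))} := by
  intro x hx
  refine le_trans hx (zpow_le_zpow_right₀ one_lt_p.le ?_)
  omega

lemma sphere_disjoint : Pairwise (Function.onFun Disjoint
    (fun n : ℕ => {x : ℚ_[p] | ‖x‖ = (p:ℝ) ^ (-(n:ℤ))})) := by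
  intro m n hmn
  rw [Function.onFun, Set.disjoint_left]
  rintro x hxm hxn
  apply hmn
  simp only [Set.mem_setOf_eq] at hxm hxn
  have heq := hxm.symm.trans hxn
  have h1 : -(m:ℤ) ≤ -(n:ℤ) := (zpow_le_zpow_iff_right₀ one_lt_p).mp heq.le
  have h2 : -(n:ℤ) ≤ -(m:ℤ) := (zpow_le_zpow_iff_right₀ one_lt_p).mp heq.ge
  omega

lemma ball_diff_zero : {x : ℚ_[p] | ‖x‖ ≤ 1} \ {0} =
    ⋃ n : ℕ, {x : ℚ_[p] | ‖x‖ = (p:ℝ) ^ (-(n:ℤ))} := by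
  have h1 : (1:ℝ) < (p:ℝ) := one_lt_p
  ext x
  simp only [Set.mem_diff, Set.mem_setOf_eq, Set.mem_singleton_iff, Set.mem_iUnion]
  constructor
  · rintro ⟨hle, hx0⟩
    rw [Padic.norm_eq_zpow_neg_valuation hx0] at *
    have hv : -x.valuation ≤ 0 := by
      rw [show (1:ℝ) = (p:ℝ) ^ (0:ℤ) by simp] at hle
      exact (zpow_le_zpow_iff_right₀ h1).mp hle
    refine ⟨x.valuation.toNat, ?_⟩
    congr 1
    omega
  · rintro ⟨n, hn⟩
    have hpos : (0:ℝ) < (p:ℝ) ^ (-(n:ℤ)) := zpow_pos (by linarith) _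
    refine ⟨?_, ?_⟩
    · rw [hn]
      apply zpow_le_one_of_nonpos₀ h1.le
      omega
    · rintro rfl
      rw [norm_zero] at hn
      exact absurd hn.symm (ne_of_gt hpos)


lemma ofReal_pow_cpow {r : ℝ} (hr : 0 < r) (n : ℕ) (s : ℂ) :
    (((r ^ n : ℝ)) : ℂ) ^ s = (((r : ℂ)) ^ s) ^ n := by
  have hrn : (0:ℝ) < r ^ n := pow_pos hr n
  have h1 : ((r ^ n : ℝ) : ℂ) ≠ 0 := by exact_mod_cast hrn.ne'
  have h2 : ((r : ℝ) : ℂ) ≠ 0 := by exact_mod_cast hr.ne'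
  rw [Complex.cpow_def_of_ne_zero h1, Complex.cpow_def_of_ne_zero h2]
  rw [← Complex.ofReal_log hrn.le, ← Complex.ofReal_log hr.le, Real.log_pow]
  rw [← Complex.exp_nat_mul]
  push_cast
  ring_nf

lemma cpow_w {p : ℕ} (hp0 : 0 < p) (s : ℂ) :
    ((p:ℂ))⁻¹ * ((p:ℂ))⁻¹ ^ s = (p : ℂ) ^ (-(s+1)) := by
  have harg : ((p:ℂ)).arg ≠ Real.pi := by
    rw [Complex.natCast_arg]
    exact Real.pi_ne_zero.symm
  rw [Complex.inv_cpow _ _ harg, ← Complex.cpow_neg]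
  have h2 : (p:ℂ)⁻¹ = (p:ℂ) ^ (-1 : ℂ) := by
    rw [Complex.cpow_neg, Complex.cpow_one]
  rw [h2, ← Complex.cpow_add _ _ (by exact_mod_cast hp0.ne')]
  ring_nf

lemma norm_w_lt_one {p : ℕ} (hp1 : 1 < p) {s : ℂ} (hs : -1 < s.re) :
    ‖(p : ℂ) ^ (-(s+1))‖ < 1 := by
  have hq1 : (1:ℝ) < (p:ℝ) := by exact_mod_cast hp1
  have : ((p:ℂ)) = (((p:ℝ)):ℂ) := by push_cast; rfl
  rw [this, Complex.norm_cpow_eq_rpow_re_of_pos (by linarith)]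
  apply Real.rpow_lt_one_of_one_lt_of_neg hq1
  simp only [Complex.neg_re, Complex.add_re, Complex.one_re]
  linarith

variable (μ : Measure ℚ_[p]) [μ.IsAddHaarMeasure]

lemma meas_ball (hμ : μ {x : ℚ_[p] | ‖x‖ ≤ 1} = 1) (n : ℕ) :
    μ {x : ℚ_[p] | ‖x‖ ≤ (p:ℝ) ^ (-(n:ℤ))} = ((p : ℝ≥0∞) ^ n)⁻¹ := by
  have hsets : ∀ i : Fin (p ^ n),
      μ {x : ℚ_[p] | ‖x - ((i : ℕ) : ℚ_[p])‖ ≤ (p:ℝ) ^ (-(n:ℤ))}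
        = μ {x : ℚ_[p] | ‖x‖ ≤ (p:ℝ) ^ (-(n:ℤ))} := by
    intro i
    have hset : {x : ℚ_[p] | ‖x - ((i : ℕ) : ℚ_[p])‖ ≤ (p:ℝ) ^ (-(n:ℤ))}
        = (fun x => (-((i : ℕ) : ℚ_[p])) + x) ⁻¹' {x : ℚ_[p] | ‖x‖ ≤ (p:ℝ) ^ (-(n:ℤ))} := by
      ext x; simp [Set.mem_preimage, neg_add_eq_sub]
    rw [hset, measure_preimage_add]
  have hmeas : ∀ i : Fin (p ^ n),
      MeasurableSet {x : ℚ_[p] | ‖x - ((i : ℕ) : ℚ_[p])‖ ≤ (p:ℝ) ^ (-(n:ℤ))} := fun i =>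
    (isClosed_le (continuous_norm.comp (continuous_sub_right _)) continuous_const).measurableSet
  have key : (1 : ℝ≥0∞) = (p : ℝ≥0∞) ^ n * μ {x : ℚ_[p] | ‖x‖ ≤ (p:ℝ) ^ (-(n:ℤ))} := by
    rw [← hμ, cover n, measure_iUnion (cover_disjoint n) hmeas]
    simp only [hsets, tsum_fintype, Finset.sum_const, Finset.card_univ, Fintype.card_fin,
      nsmul_eq_mul]
    push_cast
    ring
  have hpn : ((p:ℝ≥0∞) ^ n) ≠ 0 := by
    simp [pow_ne_zero, Nat.cast_ne_zero, hp.1.ne_zero]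
  have hpt : ((p:ℝ≥0∞) ^ n) ≠ ⊤ := by
    simp [ENNReal.pow_ne_top, ENNReal.natCast_ne_top]
  calc μ {x : ℚ_[p] | ‖x‖ ≤ (p:ℝ) ^ (-(n:ℤ))}
      = ((p:ℝ≥0∞) ^ n)⁻¹ * ((p:ℝ≥0∞) ^ n * μ {x : ℚ_[p] | ‖x‖ ≤ (p:ℝ) ^ (-(n:ℤ))}) := by
        rw [← mul_assoc, ENNReal.inv_mul_cancel hpn hpt, one_mul]
    _ = ((p:ℝ≥0∞) ^ n)⁻¹ := by rw [← key, mul_one]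

lemma meas_sphere (hμ : μ {x : ℚ_[p] | ‖x‖ ≤ 1} = 1) (n : ℕ) :
    μ {x : ℚ_[p] | ‖x‖ = (p:ℝ) ^ (-(n:ℤ))}
      = ((p : ℝ≥0∞) ^ n)⁻¹ - ((p : ℝ≥0∞) ^ (n+1))⁻¹ := by
  rw [sphere_eq n, measure_diff (ball_antitone (Nat.le_succ n))
    (ball_measurable (n+1)).nullMeasurableSet, meas_ball μ hμ, meas_ball μ hμ]
  rw [meas_ball μ hμ]
  exact ENNReal.inv_ne_top.mpr (by simp [pow_ne_zero, hp.1.ne_zero])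

lemma meas_zero (hμ : μ {x : ℚ_[p] | ‖x‖ ≤ 1} = 1) : μ ({0} : Set ℚ_[p]) = 0 := by
  have hb : ∀ n : ℕ, μ ({0} : Set ℚ_[p]) ≤ ((p : ℝ≥0∞)⁻¹) ^ n := by
    intro n
    rw [← ENNReal.inv_pow, ← meas_ball μ hμ n]
    apply measure_mono
    intro x hx
    simp only [Set.mem_singleton_iff] at hx
    subst hx
    simp only [Set.mem_setOf_eq, norm_zero]
    positivity
  have hlt : (p : ℝ≥0∞)⁻¹ < 1 := by
    rw [ENNReal.inv_lt_one]
    exact_mod_cast hp.1.one_lt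
  have htend := ENNReal.tendsto_pow_atTop_nhds_zero_of_lt_one hlt
  have := ge_of_tendsto htend (Filter.Eventually.of_forall hb)
  simpa using this


lemma inv_pow_eq_ofReal (n : ℕ) :
    ((p : ℝ≥0∞) ^ n)⁻¹ = ENNReal.ofReal (((p:ℝ)⁻¹) ^ n) := by
  have hq0 : (0:ℝ) < (p:ℝ) := by exact_mod_cast hp.1.pos
  rw [inv_pow, ENNReal.ofReal_inv_of_pos (by positivity), ENNReal.ofReal_pow hq0.le,
    ENNReal.ofReal_natCast]

end PadicHaarAux

/-- For `Re s > -1`, `∫_{ℤ_p} ‖x‖^s dμ(x) = (1 - 1/p)/(1 - p^{-(s+1)})`,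
where `μ` is the Haar measure on `ℚ_p` with `μ(ℤ_p) = 1`. -/
theorem integral_padic_norm_cpow_integers
    (p : ℕ) [Fact p.Prime] (μ : Measure ℚ_[p]) [μ.IsAddHaarMeasure]
    (hμ : μ {x : ℚ_[p] | ‖x‖ ≤ 1} = 1) (s : ℂ) (hs : -1 < s.re) :
    ∫ x in {x : ℚ_[p] | ‖x‖ ≤ 1}, (‖x‖ : ℂ) ^ s ∂μ =
      (1 - 1 / (p : ℂ)) / (1 - (p : ℂ) ^ (-(s + 1))) := by
  classical
  open PadicHaarAux in
  have hp : p.Prime := Fact.out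
  have hq1 : (1:ℝ) < (p:ℝ) := by exact_mod_cast hp.one_lt
  have hq0 : (0:ℝ) < (p:ℝ) := by linarith
  set r : ℝ := (p:ℝ)⁻¹ with hrdef
  have hr0 : 0 < r := by positivity
  have hr1 : r < 1 := inv_lt_one_of_one_lt₀ hq1
  set S : ℕ → Set ℚ_[p] := fun n => {x : ℚ_[p] | ‖x‖ = (p:ℝ) ^ (-(n:ℤ))} with hSdef
  set f : ℚ_[p] → ℂ := fun x => ((‖x‖ : ℝ) : ℂ) ^ s with hfdef
  set w : ℂ := (p : ℂ) ^ (-(s+1)) with hwdef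
  have hzr : ∀ n : ℕ, (p:ℝ) ^ (-(n:ℤ)) = r ^ n := fun n => by
    rw [zpow_neg, zpow_natCast, inv_pow]
  set c : ℕ → ℂ := fun n => ((r:ℂ) ^ s) ^ n with hcdef
  have hfc : ∀ n : ℕ, ∀ x ∈ S n, f x = c n := by
    intro n x hx
    simp only [hSdef, Set.mem_setOf_eq] at hx
    simp only [hfdef, hcdef]
    rw [hx, hzr n, ofReal_pow_cpow hr0]
  have hSm : ∀ n : ℕ, MeasurableSet (S n) := sphere_measurable
  have hTm : MeasurableSet (⋃ n, S n) := MeasurableSet.iUnion hSm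
  -- measurability of f on the union
  have hg : Measurable fun x : ℚ_[p] => Complex.exp (Complex.log ((‖x‖:ℝ):ℂ) * s) :=
    ((Complex.measurable_ofReal.comp measurable_norm).clog.mul_const s).cexp
  have hfg : ∀ x ∈ ⋃ n, S n, f x = Complex.exp (Complex.log ((‖x‖:ℝ):ℂ) * s) := by
    intro x hx
    simp only [Set.mem_iUnion, hSdef, Set.mem_setOf_eq] at hx
    obtain ⟨n, hn⟩ := hx
    have hxpos : (0:ℝ) < ‖x‖ := by rw [hn]; positivity
    have hne : ((‖x‖:ℝ):ℂ) ≠ 0 := by exact_mod_cast hxpos.ne'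
    simp only [hfdef]
    rw [Complex.cpow_def_of_ne_zero hne]
  have haesm : AEStronglyMeasurable f (μ.restrict (⋃ n, S n)) := by
    refine hg.aestronglyMeasurable.congr ?_
    rw [Filter.EventuallyEq, ae_restrict_iff' hTm]
    exact Filter.Eventually.of_forall fun x hx => (hfg x hx).symm
  -- norms of the constants
  have hcn : ∀ n : ℕ, ((‖c n‖₊ : ℝ≥0∞)) = ENNReal.ofReal ((r ^ s.re) ^ n) := by
    intro n
    rw [show ((‖c n‖₊ : ℝ≥0∞)) = ENNReal.ofReal ‖c n‖ from (ofReal_norm _).symm]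
    congr 1
    simp only [hcdef, norm_pow]
    congr 1
    rw [Complex.norm_cpow_eq_rpow_re_of_pos hr0]
  -- measure of spheres
  have hμS : ∀ n : ℕ, μ (S n) = ((p:ℝ≥0∞) ^ n)⁻¹ - ((p:ℝ≥0∞) ^ (n+1))⁻¹ :=
    meas_sphere μ hμ
  have hple : ∀ n : ℕ, ((p:ℝ≥0∞) ^ (n+1))⁻¹ ≤ ((p:ℝ≥0∞) ^ n)⁻¹ := by
    intro n
    apply ENNReal.inv_le_inv.mpr
    apply pow_le_pow_right₀ _ (Nat.le_succ n)
    exact_mod_cast hp.one_le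
  have hpn_ne_top : ∀ n : ℕ, ((p:ℝ≥0∞) ^ n)⁻¹ ≠ ⊤ := by
    intro n
    exact ENNReal.inv_ne_top.mpr (by simp [pow_ne_zero, hp.ne_zero])
  have hμS_le : ∀ n : ℕ, μ (S n) ≤ ENNReal.ofReal (r ^ n) := by
    intro n
    rw [hμS n, ← inv_pow_eq_ofReal n]
    exact tsub_le_self
  -- integrability
  set ρ : ℝ≥0∞ := ENNReal.ofReal (r ^ s.re * r) with hρdef
  have hρ1 : ρ < 1 := by
    have hlt : r ^ s.re * r < 1 := by
      have h := Real.rpow_lt_one hr0.le hr1 (show (0:ℝ) < s.re + 1 by linarith)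
      rwa [Real.rpow_add hr0, Real.rpow_one] at h
    rw [hρdef]
    exact ENNReal.ofReal_lt_one.mpr hlt
  have hint : IntegrableOn f (⋃ n, S n) μ := by
    refine ⟨haesm, ?_⟩
    rw [HasFiniteIntegral, lintegral_iUnion hSm sphere_disjoint]
    have hterm : ∀ n : ℕ, (∫⁻ x in S n, ‖f x‖₊ ∂μ) ≤ ρ ^ n := by
      intro n
      have h1 : (∫⁻ x in S n, (‖f x‖₊ : ℝ≥0∞) ∂μ) = (‖c n‖₊ : ℝ≥0∞) * μ (S n) := by
        rw [setLIntegral_congr_fun (hSm n)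
          (fun x hx => by rw [hfc n x hx]),
          setLIntegral_const]
      rw [h1, hcn n]
      calc ENNReal.ofReal ((r ^ s.re) ^ n) * μ (S n)
          ≤ ENNReal.ofReal ((r ^ s.re) ^ n) * ENNReal.ofReal (r ^ n) :=
            mul_le_mul_right (hμS_le n) _
        _ = ρ ^ n := by
            rw [← ENNReal.ofReal_mul (by positivity), ← mul_pow, hρdef,
              ← ENNReal.ofReal_pow (by positivity)]
    calc (∑' n, ∫⁻ x in S n, ‖f x‖₊ ∂μ) ≤ ∑' n, ρ ^ n := ENNReal.tsum_le_tsum hterm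
      _ = (1 - ρ)⁻¹ := ENNReal.tsum_geometric ρ
      _ < ⊤ := ENNReal.inv_lt_top.mpr (tsub_pos_of_lt hρ1)
  -- the main computation
  have hsets : {x : ℚ_[p] | ‖x‖ ≤ 1} =ᵐ[μ] ⋃ n, S n := by
    rw [← ball_diff_zero]
    symm
    rw [diff_ae_eq_self]
    exact measure_mono_null Set.inter_subset_right (meas_zero μ hμ)
  have hμSreal : ∀ n : ℕ, (μ (S n)).toReal = r ^ n * (1 - r) := by
    intro n
    rw [hμS n, ENNReal.toReal_sub_of_le (hple n) (hpn_ne_top n)]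
    rw [ENNReal.toReal_inv, ENNReal.toReal_inv, ENNReal.toReal_pow, ENNReal.toReal_pow,
      ENNReal.toReal_natCast]
    rw [hrdef, inv_pow]
    field_simp
    ring
  have hterm : ∀ n : ℕ, (μ (S n)).toReal • c n = (1 - 1/(p:ℂ)) * w ^ n := by
    intro n
    rw [hμSreal n, Complex.real_smul, hcdef]
    push_cast
    rw [show ((r:ℂ) ^ n * (1 - (r:ℂ))) * ((r:ℂ) ^ s) ^ n
        = (1 - (r:ℂ)) * ((r:ℂ) * (r:ℂ) ^ s) ^ n by rw [mul_pow]; ring]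
    rw [hrdef]
    push_cast
    rw [cpow_w hp.pos s, ← hwdef, one_div]
    
  calc ∫ x in {x : ℚ_[p] | ‖x‖ ≤ 1}, f x ∂μ
      = ∫ x in ⋃ n, S n, f x ∂μ := setIntegral_congr_set hsets
    _ = ∑' n, ∫ x in S n, f x ∂μ := integral_iUnion hSm sphere_disjoint hint
    _ = ∑' n, (μ (S n)).toReal • c n := by
        congr 1
        ext n
        rw [setIntegral_congr_fun (hSm n) (hfc n), setIntegral_const, measureReal_def]
    _ = ∑' n, (1 - 1/(p:ℂ)) * w ^ n := by
        congr 1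
        ext n
        exact hterm n
    _ = (1 - 1/(p:ℂ)) * (1 - w)⁻¹ := by
        rw [tsum_mul_left, tsum_geometric_of_norm_lt_one (norm_w_lt_one hp.one_lt hs)]
    _ = (1 - 1 / (p : ℂ)) / (1 - w) := by ring
end

section
/- Let p be a prime number and ψ a standard additive character of ℚ_p. Let u, ξ ∈ ℤ_p be units (‖u‖_p = ‖ξ‖_p = 1), and let d ≥ 2, n ≥ 1, e ≥ 1 be integers satisfying 2e ≥ nd and e + v_p(d) < nd, where v_p(d) denotes the p-adic valuation of d. Then ∫_{ξ + p^e ℤ_p} ψ(u·p^{-nd}·t^d) dμ(t) = 0. -/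
set_option maxHeartbeats 1000000


open MeasureTheory

/-- A standard additive character of `ℚ_p`: a continuous homomorphism from the
additive group of `ℚ_p` to the unit circle in `ℂ`, trivial on `ℤ_p` and
nontrivial at some point of norm `p`. -/
structure IsStandardAddChar (p : ℕ) [Fact p.Prime] (ψ : ℚ_[p] → ℂ) : Prop where
  continuous : Continuous ψ
  map_add : ∀ x y : ℚ_[p], ψ (x + y) = ψ x * ψ y
  norm_eq_one : ∀ x : ℚ_[p], ‖ψ x‖ = 1
  trivial_on_int : ∀ x : ℚ_[p], ‖x‖ ≤ 1 → ψ x = 1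
  nontrivial : ∃ x₀ : ℚ_[p], ‖x₀‖ = p ∧ ψ x₀ ≠ 1

/-- Ultrametric bound for sums over `Finset.range`. -/
lemma padic_norm_sum_le {p : ℕ} [Fact p.Prime] {C : ℝ} (hC : 0 ≤ C) (m : ℕ)
    (f : ℕ → ℚ_[p]) (h : ∀ j < m, ‖f j‖ ≤ C) :
    ‖∑ j ∈ Finset.range m, f j‖ ≤ C := by
  induction m with
  | zero => simpa using hC
  | succ m ih =>
      rw [Finset.sum_range_succ]
      refine le_trans (Padic.nonarchimedean _ _) (max_le ?_ ?_)
      · exact ih fun j hj => h j (by omega)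
      · exact h m (by omega)

lemma padic_norm_pow_sub_pow {p : ℕ} [Fact p.Prime] {x ξ : ℚ_[p]} {r : ℝ}
    (hξ : ‖ξ‖ ≤ 1) (hx : ‖x‖ ≤ 1) (hxr : ‖x - ξ‖ ≤ r) (hr0 : 0 ≤ r) (j : ℕ) :
    ‖x ^ j - ξ ^ j‖ ≤ r := by
  induction j with
  | zero => simpa using hr0
  | succ j ih =>
      have hid : x ^ (j + 1) - ξ ^ (j + 1) = x * (x ^ j - ξ ^ j) + (x - ξ) * ξ ^ j := by ring
      rw [hid]
      refine le_trans (Padic.nonarchimedean _ _) (max_le ?_ ?_)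
      · rw [norm_mul]
        calc ‖x‖ * ‖x ^ j - ξ ^ j‖ ≤ 1 * r := by
              exact mul_le_mul hx ih (norm_nonneg _) zero_le_one
          _ = r := one_mul r
      · rw [norm_mul]
        calc ‖x - ξ‖ * ‖ξ ^ j‖ ≤ r * 1 := by
              refine mul_le_mul hxr ?_ (norm_nonneg _) hr0
              calc ‖ξ ^ j‖ = ‖ξ‖ ^ j := norm_pow _ _
                _ ≤ 1 ^ j := pow_le_pow_left₀ (norm_nonneg _) hξ j
                _ = 1 := one_pow j
          _ = r := mul_one r

lemma padic_norm_mul_pow_sub {p : ℕ} [Fact p.Prime] {x y ξ : ℚ_[p]} {r : ℝ}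
    (hξ : ‖ξ‖ ≤ 1) (hx : ‖x‖ ≤ 1) (hy : ‖y‖ ≤ 1)
    (hxr : ‖x - ξ‖ ≤ r) (hyr : ‖y - ξ‖ ≤ r) (hr0 : 0 ≤ r) (j m : ℕ) :
    ‖x ^ j * y ^ m - ξ ^ (j + m)‖ ≤ r := by
  have hid : x ^ j * y ^ m - ξ ^ (j + m)
      = (x ^ j - ξ ^ j) * y ^ m + ξ ^ j * (y ^ m - ξ ^ m) := by
    rw [pow_add]; ring
  rw [hid]
  refine le_trans (Padic.nonarchimedean _ _) (max_le ?_ ?_)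
  · rw [norm_mul]
    calc ‖x ^ j - ξ ^ j‖ * ‖y ^ m‖ ≤ r * 1 := by
          refine mul_le_mul (padic_norm_pow_sub_pow hξ hx hxr hr0 j) ?_ (norm_nonneg _) hr0
          calc ‖y ^ m‖ = ‖y‖ ^ m := norm_pow _ _
            _ ≤ 1 ^ m := pow_le_pow_left₀ (norm_nonneg _) hy m
            _ = 1 := one_pow m
      _ = r := mul_one r
  · rw [norm_mul]
    calc ‖ξ ^ j‖ * ‖y ^ m - ξ ^ m‖ ≤ 1 * r := by
          refine mul_le_mul ?_ (padic_norm_pow_sub_pow hξ hy hyr hr0 m) (norm_nonneg _)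
            zero_le_one
          calc ‖ξ ^ j‖ = ‖ξ‖ ^ j := norm_pow _ _
            _ ≤ 1 ^ j := pow_le_pow_left₀ (norm_nonneg _) hξ j
            _ = 1 := one_pow j
      _ = r := one_mul r

/-- For units `u`, `ξ` of `ℤ_p` and integers `d ≥ 2`, `n ≥ 1`, `e ≥ 1` with
`2e ≥ nd` and `e + v_p(d) < nd`, the integral of `ψ(u p^{-nd} t^d)` over
the disk `ξ + p^e ℤ_p` vanishes. -/
theorem integral_standard_char_on_disk_power
    (p : ℕ) [Fact p.Prime] (μ : Measure ℚ_[p]) [μ.IsAddHaarMeasure]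
    (hμ : μ {x : ℚ_[p] | ‖x‖ ≤ 1} = 1)
    (ψ : ℚ_[p] → ℂ) (hψ : IsStandardAddChar p ψ)
    (u ξ : ℚ_[p]) (hu : ‖u‖ = 1) (hξ : ‖ξ‖ = 1)
    (d n e : ℕ) (hd : 2 ≤ d) (hn : 1 ≤ n) (he : 1 ≤ e)
    (h2e : n * d ≤ 2 * e) (hev : e + padicValNat p d < n * d) :
    ∫ t in {t : ℚ_[p] | ‖t - ξ‖ ≤ (p : ℝ) ^ (-(e : ℤ))},
        ψ (u * (p : ℚ_[p]) ^ (-(n * d : ℤ)) * t ^ d) ∂μ = 0 := by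
  obtain ⟨x₀, hx₀norm, hx₀ne⟩ := hψ.nontrivial
  have hpprime : p.Prime := Fact.out
  have hp1 : (1 : ℝ) < p := by exact_mod_cast hpprime.one_lt
  have hp0 : (0 : ℝ) < p := lt_trans zero_lt_one hp1
  have hpne : (p : ℝ) ≠ 0 := ne_of_gt hp0
  set v : ℕ := padicValNat p d with hv
  set r : ℝ := (p : ℝ) ^ (-(e : ℤ)) with hr
  have hr0 : 0 ≤ r := le_of_lt (zpow_pos hp0 _)
  have hrle1 : r ≤ 1 := by
    rw [hr]
    calc (p : ℝ) ^ (-(e : ℤ)) ≤ (p : ℝ) ^ (0 : ℤ) :=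
          zpow_le_zpow_right₀ (le_of_lt hp1) (by omega)
      _ = 1 := zpow_zero _
  set a : ℚ_[p] := u * (p : ℚ_[p]) ^ (-(n * d : ℤ)) with ha
  have hune : u ≠ 0 := fun h => by simp [h] at hu
  have hξne : ξ ≠ 0 := fun h => by simp [h] at hξ
  have hdne : (d : ℚ_[p]) ≠ 0 := Nat.cast_ne_zero.mpr (by omega)
  have hane : a ≠ 0 := mul_ne_zero hune (zpow_ne_zero _ (Nat.cast_ne_zero.mpr hpprime.ne_zero))
  set b : ℚ_[p] := a * d * ξ ^ (d - 1) with hb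
  have hbne : b ≠ 0 := mul_ne_zero (mul_ne_zero hane hdne) (pow_ne_zero _ hξne)
  set s₀ : ℚ_[p] := x₀ / b with hs₀
  -- norm computations
  have hna : ‖a‖ = (p : ℝ) ^ ((n : ℤ) * d) := by
    rw [ha, norm_mul, hu, one_mul, Padic.norm_p_zpow, neg_neg]
  have hnd : ‖(d : ℚ_[p])‖ = (p : ℝ) ^ (-(v : ℤ)) := by
    rw [Padic.norm_eq_zpow_neg_valuation hdne, Padic.valuation_natCast, hv]
  have hnξp : ‖ξ ^ (d - 1)‖ = 1 := by rw [norm_pow, hξ, one_pow]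
  have hnb : ‖b‖ = (p : ℝ) ^ ((n : ℤ) * d - v) := by
    rw [hb, norm_mul, norm_mul, hna, hnd, hnξp, mul_one, ← zpow_add₀ hpne]
    ring_nf
  have hns₀ : ‖s₀‖ = (p : ℝ) ^ (1 + (v : ℤ) - (n : ℤ) * d) := by
    rw [hs₀, norm_div, hx₀norm, hnb, div_eq_iff (by positivity), ← zpow_add₀ hpne,
      show (1 + (v : ℤ) - (n : ℤ) * d) + ((n : ℤ) * d - v) = 1 by ring, zpow_one]
  have hs₀r : ‖s₀‖ ≤ r := by
    rw [hns₀, hr]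
    exact zpow_le_zpow_right₀ (le_of_lt hp1) (by push_cast; omega)
  -- the disk
  set D : Set ℚ_[p] := {t : ℚ_[p] | ‖t - ξ‖ ≤ r} with hD
  have hDball : D = Metric.closedBall ξ r := by
    ext t; simp [hD, Metric.mem_closedBall, dist_eq_norm]
  have hDmeas : MeasurableSet D := by rw [hDball]; exact measurableSet_closedBall
  have hDinv : ∀ t : ℚ_[p], t + s₀ ∈ D ↔ t ∈ D := by
    intro t
    constructor
    · intro ht
      have : t - ξ = (t + s₀ - ξ) + (-s₀) := by ring
      simp only [hD, Set.mem_setOf_eq] at ht ⊢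
      rw [this]
      refine le_trans (Padic.nonarchimedean _ _) (max_le ht ?_)
      rwa [norm_neg]
    · intro ht
      simp only [hD, Set.mem_setOf_eq] at ht ⊢
      have : t + s₀ - ξ = (t - ξ) + s₀ := by ring
      rw [this]
      exact le_trans (Padic.nonarchimedean _ _) (max_le ht hs₀r)
  set f : ℚ_[p] → ℂ := fun t => ψ (a * t ^ d) with hf
  -- key pointwise identity
  have key : ∀ t ∈ D, f (t + s₀) = ψ x₀ * f t := by
    intro t ht
    have htr : ‖t - ξ‖ ≤ r := ht
    have htsr : ‖t + s₀ - ξ‖ ≤ r := (hDinv t).mpr ht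
    have htn : ‖t‖ ≤ 1 := by
      have : t = ξ + (t - ξ) := by ring
      rw [this]
      refine le_trans (Padic.nonarchimedean _ _) (max_le (le_of_eq hξ) ?_)
      exact le_trans htr hrle1
    have htsn : ‖t + s₀‖ ≤ 1 := by
      have : t + s₀ = ξ + (t + s₀ - ξ) := by ring
      rw [this]
      refine le_trans (Padic.nonarchimedean _ _) (max_le (le_of_eq hξ) ?_)
      exact le_trans htsr hrle1
    set δ : ℚ_[p] :=
      (∑ j ∈ Finset.range d, (t + s₀) ^ j * t ^ (d - 1 - j)) - (d : ℚ_[p]) * ξ ^ (d - 1)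
      with hδdef
    have hδsum : δ = ∑ j ∈ Finset.range d,
        ((t + s₀) ^ j * t ^ (d - 1 - j) - ξ ^ (d - 1)) := by
      rw [Finset.sum_sub_distrib, Finset.sum_const, Finset.card_range, nsmul_eq_mul, hδdef]
    have hδ : ‖δ‖ ≤ r := by
      rw [hδsum]
      refine padic_norm_sum_le hr0 d _ ?_
      intro j hj
      have hjd : j + (d - 1 - j) = d - 1 := by omega
      have hbd := padic_norm_mul_pow_sub (le_of_eq hξ) htsn htn htsr htr hr0 j (d - 1 - j)
      rwa [hjd] at hbd
    have hw : ‖a * s₀ * δ‖ ≤ 1 := by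
      rw [norm_mul, norm_mul, hna, hns₀]
      have h1 : (p : ℝ) ^ ((n : ℤ) * d) * (p : ℝ) ^ (1 + (v : ℤ) - (n : ℤ) * d) * ‖δ‖
          ≤ (p : ℝ) ^ ((n : ℤ) * d) * (p : ℝ) ^ (1 + (v : ℤ) - (n : ℤ) * d) * r := by
        refine mul_le_mul_of_nonneg_left hδ ?_
        positivity
      refine le_trans h1 ?_
      rw [hr, ← zpow_add₀ hpne, ← zpow_add₀ hpne]
      calc (p : ℝ) ^ ((n : ℤ) * d + (1 + (v : ℤ) - (n : ℤ) * d) + -(e : ℤ))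
          ≤ (p : ℝ) ^ (0 : ℤ) :=
            zpow_le_zpow_right₀ (le_of_lt hp1) (by push_cast; omega)
        _ = 1 := zpow_zero _
    have hbs₀ : b * s₀ = x₀ := by
      rw [hs₀, mul_div_cancel₀ _ hbne]
    have hgeom := geom_sum₂_mul (t + s₀) t d
    have hsum_eq : (∑ j ∈ Finset.range d, (t + s₀) ^ j * t ^ (d - 1 - j))
        = δ + (d : ℚ_[p]) * ξ ^ (d - 1) := by rw [hδdef]; ring
    have hident : a * (t + s₀) ^ d = a * t ^ d + x₀ + a * s₀ * δ := by
      have h1 : (δ + (d : ℚ_[p]) * ξ ^ (d - 1)) * s₀ = (t + s₀) ^ d - t ^ d := by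
        rw [← hsum_eq]
        simpa using hgeom
      have h2 : a * (d : ℚ_[p]) * ξ ^ (d - 1) * s₀ = x₀ := by rw [← hbs₀, hb]
      calc a * (t + s₀) ^ d = a * (t ^ d + (δ + (d : ℚ_[p]) * ξ ^ (d - 1)) * s₀) := by
            rw [h1]; ring
        _ = a * t ^ d + a * (d : ℚ_[p]) * ξ ^ (d - 1) * s₀ + a * s₀ * δ := by ring
        _ = a * t ^ d + x₀ + a * s₀ * δ := by rw [h2]
    rw [hf]
    simp only
    rw [hident, hψ.map_add, hψ.map_add, hψ.trivial_on_int _ hw, mul_one]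
    ring
  -- integral manipulation
  have hMA : MeasurableAdd ℚ_[p] :=
    ⟨fun c => (continuous_const.add continuous_id).measurable,
     fun c => (continuous_id.add continuous_const).measurable⟩
  have step1 : ∫ t in D, f (t + s₀) ∂μ = ∫ t in D, f t ∂μ := by
    rw [← integral_indicator hDmeas, ← integral_indicator hDmeas]
    have hptwise : ∀ t, D.indicator (fun t => f (t + s₀)) t = D.indicator f (t + s₀) := by
      intro t
      by_cases h : t ∈ D
      · rw [Set.indicator_of_mem h, Set.indicator_of_mem ((hDinv t).mpr h)]
      · rw [Set.indicator_of_notMem h,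
          Set.indicator_of_notMem (fun hc => h ((hDinv t).mp hc))]
    calc ∫ t, D.indicator (fun t => f (t + s₀)) t ∂μ
        = ∫ t, D.indicator f (t + s₀) ∂μ := by
          exact integral_congr_ae (Filter.Eventually.of_forall hptwise)
      _ = ∫ t, D.indicator f t ∂μ := integral_add_right_eq_self (D.indicator f) s₀
  have step2 : ∫ t in D, f (t + s₀) ∂μ = ψ x₀ * ∫ t in D, f t ∂μ := by
    rw [setIntegral_congr_fun hDmeas key, integral_const_mul]
  have hfix : ψ x₀ * ∫ t in D, f t ∂μ = ∫ t in D, f t ∂μ := by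
    rw [← step2, step1]
  have hzero : (ψ x₀ - 1) * ∫ t in D, f t ∂μ = 0 := by
    rw [sub_mul, one_mul, hfix, sub_self]
  rcases mul_eq_zero.mp hzero with h | h
  · exact absurd (sub_eq_zero.mp h) hx₀ne
  · exact h
end
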